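/- arXiv:1807.04199 — 3 statements merged into one kernel-verified Lean document; each statement's English description precedes it below -/
import Mathlib

section
/- Let h:ℝ→ℝ be continuous with primitive H, and g:ℝ→ℝ continuous with |g(u)|≤C(1+|u|) such that L:=lim_{u→+∞} g(u)/u exists. For k≥2 define u_k(t)=k on [1/2,1/2+1/k] and 0 elsewhere, with y_k(t)=∫_0^t u_k. Then lim_{k→∞} ∫_0^1 g(u_k(t)) h(y_k(t)) dt = (1/2) g(0)(h(0)+h(1)) + (H(1)−H(0)) L. -/
open MeasureTheory Filter Set

/-- Control spike of height `k` on `[1/2, 1/2 + 1/k]`. -/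
noncomputable def uSpike (k : ℕ) (t : ℝ) : ℝ :=
  if t ∈ Set.Icc (1 / 2 : ℝ) (1 / 2 + 1 / k) then (k : ℝ) else 0

noncomputable def ySpike (k : ℕ) (t : ℝ) : ℝ := ∫ s in (0:ℝ)..t, uSpike k s

lemma uSpike_eq_indicator (k : ℕ) :
    uSpike k = Set.indicator (Set.Icc (1/2 : ℝ) (1/2 + 1/k)) (fun _ => (k:ℝ)) := by
  funext t; simp [uSpike, Set.indicator]

lemma uSpike_integrable (k : ℕ) : Integrable (uSpike k) := by
  rw [uSpike_eq_indicator]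
  exact (integrableOn_const measure_Icc_lt_top.ne).integrable_indicator
    measurableSet_Icc

lemma ae_ne_half : ∀ᵐ t : ℝ, t ≠ (1/2 : ℝ) := by
  have : (volume : Measure ℝ) {(1/2 : ℝ)} = 0 := measure_singleton _
  exact (MeasureTheory.measure_eq_zero_iff_ae_notMem).mp this

lemma ySpike_eval1 (k : ℕ) (t : ℝ) (ht : t ≤ 1/2) : ySpike k t = 0 := by
  rw [ySpike]
  have key : (∫ s in (0:ℝ)..t, uSpike k s) = ∫ s in (0:ℝ)..t, (0:ℝ) := by
    apply intervalIntegral.integral_congr_ae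
    filter_upwards [ae_ne_half] with x hx hmem
    have hxle : x ≤ max 0 t := hmem.2
    have hlt : x < 1/2 := lt_of_le_of_ne (hxle.trans (max_le (by norm_num) ht)) hx
    have hni : x ∉ Set.Icc (1/2:ℝ) (1/2+1/(k:ℝ)) := fun hm => absurd hm.1 (not_le.mpr hlt)
    simp only [uSpike, if_neg hni]
  rw [key, intervalIntegral.integral_zero]

lemma ySpike_eval2 (k : ℕ) (hk : 0 < k) (t : ℝ) (h1 : 1/2 ≤ t) (h2 : t ≤ 1/2 + 1/k) :
    ySpike k t = k * (t - 1/2) := by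
  have hi : ∀ a b : ℝ, IntervalIntegrable (uSpike k) volume a b :=
    fun a b => (uSpike_integrable k).intervalIntegrable
  rw [ySpike, ← intervalIntegral.integral_add_adjacent_intervals (hi 0 (1/2)) (hi (1/2) t)]
  have e1 : (∫ s in (0:ℝ)..(1/2), uSpike k s) = 0 := ySpike_eval1 k (1/2) le_rfl
  have e2 : (∫ s in (1/2 : ℝ)..t, uSpike k s) = ∫ s in (1/2 : ℝ)..t, (k:ℝ) := by
    apply intervalIntegral.integral_congr
    intro x hx
    rw [Set.uIcc_of_le h1] at hx
    have : x ∈ Set.Icc (1/2 : ℝ) (1/2 + 1/k) := ⟨hx.1, hx.2.trans h2⟩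
    simp only [uSpike, if_pos this]
  rw [e1, e2, intervalIntegral.integral_const, smul_eq_mul]
  ring

lemma ySpike_eval3 (k : ℕ) (hk : 0 < k) (t : ℝ) (ht : 1/2 + 1/k ≤ t) :
    ySpike k t = 1 := by
  have hi : ∀ a b : ℝ, IntervalIntegrable (uSpike k) volume a b :=
    fun a b => (uSpike_integrable k).intervalIntegrable
  have hkR : (0:ℝ) < k := by exact_mod_cast hk
  rw [ySpike, ← intervalIntegral.integral_add_adjacent_intervals (hi 0 (1/2 + 1/k)) (hi (1/2 + 1/k) t)]
  have e1 : (∫ s in (0:ℝ)..(1/2 + 1/k), uSpike k s) = 1 := by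
    have := ySpike_eval2 k hk (1/2 + 1/k) (le_add_of_nonneg_right (by positivity)) le_rfl
    rw [ySpike] at this
    rw [this]; field_simp; ring
  have e2 : (∫ s in (1/2 + 1/(k:ℝ))..t, uSpike k s) = 0 := by
    rw [show (0:ℝ) = ∫ s in (1/2 + 1/(k:ℝ))..t, (0:ℝ) by simp]
    apply intervalIntegral.integral_congr_ae
    filter_upwards with x hx
    rw [Set.uIoc_of_le ht] at hx
    have : x ∉ Set.Icc (1/2:ℝ) (1/2+1/(k:ℝ)) := fun hm => absurd hm.2 (not_le.mpr hx.1)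
    simp only [uSpike, if_neg this]
  rw [e1, e2, add_zero]

lemma integral_eval (h H g : ℝ → ℝ)
    (hh : Continuous h) (hH : ∀ x, HasDerivAt H (h x) x) (hg : Continuous g)
    (k : ℕ) (hk : 2 ≤ k) :
    (∫ t in (0:ℝ)..1, g (uSpike k t) * h (ySpike k t)) =
      1/2 * (g 0 * h 0) + g k / k * (H 1 - H 0) + (1/2 - 1/k) * (g 0 * h 1) := by
  have hk0 : 0 < k := by omega
  have hkR : (2:ℝ) ≤ k := by exact_mod_cast hk
  have hkR0 : (0:ℝ) < k := by linarith
  have hkne : (k:ℝ) ≠ 0 := ne_of_gt hkR0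
  set b : ℝ := 1/2 + 1/(k:ℝ) with hbdef
  have hbge : (1/2:ℝ) ≤ b := le_add_of_nonneg_right (by positivity)
  have hb1 : b ≤ 1 := by
    have : 1/(k:ℝ) ≤ 1/2 := by
      rw [div_le_div_iff₀ hkR0 (by norm_num)]; linarith
    simp only [hbdef]; linarith
  set f : ℝ → ℝ := fun t => g (uSpike k t) * h (ySpike k t) with hfdef
  -- piece 1
  have A1 : ∀ᵐ x : ℝ, x ∈ Set.uIoc (0:ℝ) (1/2) → f x = g 0 * h 0 := by
    filter_upwards [ae_ne_half] with x hx hmem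
    rw [Set.uIoc_of_le (by norm_num : (0:ℝ) ≤ 1/2)] at hmem
    have hlt : x < 1/2 := lt_of_le_of_ne hmem.2 hx
    have hni : x ∉ Set.Icc (1/2:ℝ) (1/2+1/(k:ℝ)) := fun hm => absurd hm.1 (not_le.mpr hlt)
    simp only [hfdef, uSpike, if_neg hni, ySpike_eval1 k x hlt.le]
  have I1 : IntervalIntegrable f volume 0 (1/2) := by
    rw [intervalIntegrable_iff_integrableOn_Ioc_of_le (by norm_num : (0:ℝ) ≤ 1/2)]
    apply (integrableOn_const measure_Ioc_lt_top.ne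
      : IntegrableOn (fun _ => g 0 * h 0) (Set.Ioc (0:ℝ) (1/2)) volume).congr
    filter_upwards [ae_restrict_mem measurableSet_Ioc, ae_restrict_of_ae A1] with x hx1 hx2
    exact (hx2 (by rwa [Set.uIoc_of_le (by norm_num : (0:ℝ) ≤ 1/2)])).symm
  have V1 : (∫ t in (0:ℝ)..(1/2), f t) = 1/2 * (g 0 * h 0) := by
    rw [intervalIntegral.integral_congr_ae A1, intervalIntegral.integral_const, smul_eq_mul]
    ring
  -- piece 2
  set φ : ℝ → ℝ := fun t => g k * h ((k:ℝ) * (t - 1/2)) with hφdef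
  have hφc : Continuous φ := by
    apply continuous_const.mul
    exact hh.comp ((continuous_const.mul (continuous_id.sub continuous_const)))
  have E2 : Set.EqOn φ f (Set.uIcc (1/2:ℝ) b) := by
    intro x hx
    rw [Set.uIcc_of_le hbge] at hx
    have hxm : x ∈ Set.Icc (1/2:ℝ) (1/2+1/(k:ℝ)) := hx
    simp only [hfdef, hφdef, uSpike, if_pos hxm, ySpike_eval2 k hk0 x hx.1 hx.2]
  have I2 : IntervalIntegrable f volume (1/2) b := by
    rw [intervalIntegrable_iff_integrableOn_Ioc_of_le hbge]
    exact (hφc.integrableOn_Ioc).congr_fun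
      (fun x hx => E2 (by rw [Set.uIcc_of_le hbge]; exact Set.Ioc_subset_Icc_self hx))
      measurableSet_Ioc
  have V2 : (∫ t in (1/2:ℝ)..b, f t) = g k / k * (H 1 - H 0) := by
    rw [← intervalIntegral.integral_congr E2]
    have hF : ∀ t ∈ Set.uIcc (1/2:ℝ) b,
        HasDerivAt (fun t => g k / k * H ((k:ℝ) * (t - 1/2))) (φ t) t := by
      intro t _
      have hlin : HasDerivAt (fun t : ℝ => (k:ℝ) * (t - 1/2)) (k:ℝ) t := by
        simpa only [id_eq, id, mul_one] using ((hasDerivAt_id t).sub_const (1/2)).const_mul (k:ℝ)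
      have hcomp := (hH ((k:ℝ) * (t - 1/2))).comp t hlin
      have := hcomp.const_mul (g k / k)
      have heq : g k / k * (h ((k:ℝ) * (t - 1/2)) * k) = φ t := by
        simp only [hφdef]; rw [mul_comm (h _) _, ← mul_assoc, div_mul_cancel₀ _ hkne]
      rw [heq] at this
      exact this
    rw [intervalIntegral.integral_eq_sub_of_hasDerivAt hF (hφc.intervalIntegrable _ _)]
    have e1 : (k:ℝ) * (b - 1/2) = 1 := by simp only [hbdef]; field_simp; ring
    have e2 : (k:ℝ) * ((1:ℝ)/2 - 1/2) = 0 := by ring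
    rw [e1, e2]; ring
  -- piece 3
  have A3 : ∀ x : ℝ, x ∈ Set.uIoc b 1 → f x = g 0 * h 1 := by
    intro x hx
    rw [Set.uIoc_of_le hb1] at hx
    have hni : x ∉ Set.Icc (1/2:ℝ) (1/2+1/(k:ℝ)) := fun hm => absurd hm.2 (not_le.mpr hx.1)
    simp only [hfdef, uSpike, if_neg hni, ySpike_eval3 k hk0 x hx.1.le]
  have I3 : IntervalIntegrable f volume b 1 := by
    rw [intervalIntegrable_iff_integrableOn_Ioc_of_le hb1]
    apply (integrableOn_const measure_Ioc_lt_top.ne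
      : IntegrableOn (fun _ => g 0 * h 1) (Set.Ioc b 1) volume).congr
    filter_upwards [ae_restrict_mem measurableSet_Ioc] with x hx1
    exact (A3 x (by rwa [Set.uIoc_of_le hb1])).symm
  have V3 : (∫ t in b..1, f t) = (1/2 - 1/k) * (g 0 * h 1) := by
    rw [intervalIntegral.integral_congr_ae (Filter.Eventually.of_forall A3),
      intervalIntegral.integral_const, smul_eq_mul]
    simp only [hbdef]; ring
  rw [← intervalIntegral.integral_add_adjacent_intervals I1 (I2.trans I3),
    ← intervalIntegral.integral_add_adjacent_intervals I2 I3, V1, V2, V3]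
  ring

theorem concentration_discontinuity_limit
    (h H g : ℝ → ℝ) (C L : ℝ) (hC : 0 < C)
    (hh : Continuous h) (hH : ∀ x, HasDerivAt H (h x) x)
    (hg : Continuous g) (hgrow : ∀ u, |g u| ≤ C * (1 + |u|))
    (hL : Tendsto (fun u : ℝ => g u / u) atTop (nhds L)) :
    Tendsto (fun k : ℕ => ∫ t in (0:ℝ)..1, g (uSpike k t) * h (ySpike k t))
      atTop (nhds (1 / 2 * g 0 * (h 0 + h 1) + (H 1 - H 0) * L)) := by
  have t1 : Tendsto (fun k : ℕ => g k / k) atTop (nhds L) :=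
    hL.comp tendsto_natCast_atTop_atTop
  have t2 : Tendsto (fun k : ℕ => 1/(k:ℝ)) atTop (nhds 0) :=
    tendsto_one_div_atTop_nhds_zero_nat
  have tS : Tendsto (fun k : ℕ => 1/2 * (g 0 * h 0) + g k / k * (H 1 - H 0)
      + (1/2 - 1/(k:ℝ)) * (g 0 * h 1)) atTop
      (nhds (1/2 * (g 0 * h 0) + L * (H 1 - H 0) + (1/2 - 0) * (g 0 * h 1))) :=
    (tendsto_const_nhds.add (t1.mul_const _)).add ((tendsto_const_nhds.sub t2).mul_const _)
  have hval : 1/2 * (g 0 * h 0) + L * (H 1 - H 0) + ((1:ℝ)/2 - 0) * (g 0 * h 1)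
      = 1 / 2 * g 0 * (h 0 + h 1) + (H 1 - H 0) * L := by ring
  rw [hval] at tS
  apply tS.congr'
  filter_upwards [eventually_ge_atTop 2] with k hk
  exact (integral_eval h H g hh hH hg k hk).symm
end

section
/- Fix ε∈(0,1). For k≥1 define u_k(t)=√((k(1−ε)+ε)²−ε²) for t∈[0,1/k] and u_k(t)=0 for t>1/k, and let y_k solve ẏ_k=√(ε²+u_k²), y_k(0)=0. Then y_k(t)=(k(1−ε)+ε)t on [0,1/k] and y_k(t)=εt+1−ε on (1/k,1]; in particular y_k(1)=1 and 0≤y_k(t)≤1 for all t, and lim_{k→∞} ∫_0^1 (t+y_k(t)) u_k(t) dt = (1−ε)²/2. -/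
open MeasureTheory Filter Set

/-- The concentrating control sequence for the introductory problem with `ε ∈ (0,1)`. -/
noncomputable def uEps (ε : ℝ) (k : ℕ) (t : ℝ) : ℝ :=
  if t ∈ Set.Icc (0:ℝ) (1 / k) then
    Real.sqrt (((k : ℝ) * (1 - ε) + ε) ^ 2 - ε ^ 2) else 0

/-- The corresponding trajectory, solving `ẏ = √(ε² + u²)`, `y(0) = 0`. -/
noncomputable def yEps (ε : ℝ) (k : ℕ) (t : ℝ) : ℝ :=
  ∫ s in (0:ℝ)..t, Real.sqrt (ε ^ 2 + (uEps ε k s) ^ 2)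

lemma sqrt_integrand (ε : ℝ) (hε0 : 0 ≤ ε) (hε1 : ε ≤ 1) (k : ℕ) (s : ℝ) :
    Real.sqrt (ε^2 + (uEps ε k s)^2) =
    if s ∈ Set.Icc (0:ℝ) (1/k) then (k:ℝ)*(1-ε)+ε else ε := by
  have ha : ε ≤ (k:ℝ)*(1-ε)+ε := by nlinarith [Nat.cast_nonneg (α := ℝ) k]
  have ha0 : (0:ℝ) ≤ (k:ℝ)*(1-ε)+ε := le_trans hε0 ha
  unfold uEps
  by_cases h : s ∈ Set.Icc (0:ℝ) (1/k) <;> simp only [h, if_true, if_false]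
  · rw [Real.sq_sqrt (by nlinarith)]
    have : ε^2 + (((k:ℝ)*(1-ε)+ε)^2 - ε^2) = ((k:ℝ)*(1-ε)+ε)^2 := by ring
    rw [this, Real.sqrt_sq ha0]
  · simpa using Real.sqrt_sq hε0

lemma yEps_low (ε : ℝ) (hε0 : 0 ≤ ε) (hε1 : ε ≤ 1) (k : ℕ)
    {t : ℝ} (ht : t ∈ Set.Icc (0:ℝ) (1/k)) :
    yEps ε k t = ((k:ℝ)*(1-ε)+ε) * t := by
  unfold yEps
  rw [intervalIntegral.integral_congr (g := fun _ => (k:ℝ)*(1-ε)+ε)]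
  · simp; ring
  · intro s hs
    rw [Set.uIcc_of_le ht.1] at hs
    have hmem : s ∈ Set.Icc (0:ℝ) (1/k) := ⟨hs.1, le_trans hs.2 ht.2⟩
    show Real.sqrt (ε^2 + (uEps ε k s)^2) = (k:ℝ)*(1-ε)+ε
    rw [sqrt_integrand ε hε0 hε1, if_pos hmem]

lemma yEps_high (ε : ℝ) (hε0 : 0 ≤ ε) (hε1 : ε ≤ 1) (k : ℕ) (hk : 1 ≤ k)
    {t : ℝ} (ht : 1/(k:ℝ) < t) :
    yEps ε k t = ε * t + 1 - ε := by
  have hk0 : (0:ℝ) < (k:ℝ) := by exact_mod_cast hk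
  have hik : (0:ℝ) < 1/(k:ℝ) := by positivity
  set a : ℝ := (k:ℝ)*(1-ε)+ε with ha_def
  have hF : ∀ s, Real.sqrt (ε^2 + (uEps ε k s)^2) =
      if s ∈ Set.Icc (0:ℝ) (1/k) then a else ε := sqrt_integrand ε hε0 hε1 k
  unfold yEps
  have h0t : (0:ℝ) ≤ t := le_of_lt (lt_trans hik ht)
  rw [intervalIntegral.integral_of_le h0t]
  have hsplit : Set.Ioc (0:ℝ) t = Set.Ioc (0:ℝ) (1/k) ∪ Set.Ioc (1/(k:ℝ)) t :=
    (Set.Ioc_union_Ioc_eq_Ioc (le_of_lt hik) (le_of_lt ht)).symm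
  have hc1 : IntegrableOn (fun _ : ℝ => a) (Set.Ioc (0:ℝ) (1/k)) :=
    integrableOn_const measure_Ioc_lt_top.ne
  have hI1 : IntegrableOn (fun s => Real.sqrt (ε^2 + (uEps ε k s)^2)) (Set.Ioc (0:ℝ) (1/k)) := by
    refine hc1.congr_fun ?_ measurableSet_Ioc
    intro s hs
    exact ((hF s).trans (if_pos ⟨le_of_lt hs.1, hs.2⟩)).symm
  have hc2 : IntegrableOn (fun _ : ℝ => ε) (Set.Ioc (1/(k:ℝ)) t) :=
    integrableOn_const measure_Ioc_lt_top.ne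
  have hI2 : IntegrableOn (fun s => Real.sqrt (ε^2 + (uEps ε k s)^2)) (Set.Ioc (1/(k:ℝ)) t) := by
    refine hc2.congr_fun ?_ measurableSet_Ioc
    intro s hs
    exact ((hF s).trans (if_neg (fun hmem => absurd hmem.2 (not_le.mpr hs.1)))).symm
  rw [hsplit, setIntegral_union (Set.Ioc_disjoint_Ioc_of_le le_rfl) measurableSet_Ioc hI1 hI2]
  have e1 : ∫ s in Set.Ioc (0:ℝ) (1/k), Real.sqrt (ε^2 + (uEps ε k s)^2) = a * (1/k) := by
    rw [setIntegral_congr_fun measurableSet_Ioc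
      (g := fun _ => a) (fun s hs => by rw [hF s, if_pos ⟨le_of_lt hs.1, hs.2⟩])]
    simp [Real.volume_Ioc, ENNReal.toReal_ofReal (le_of_lt hik), mul_comm]
  have e2 : ∫ s in Set.Ioc (1/(k:ℝ)) t, Real.sqrt (ε^2 + (uEps ε k s)^2) = ε * (t - 1/k) := by
    rw [setIntegral_congr_fun measurableSet_Ioc
      (g := fun _ => ε) (fun s hs => by rw [hF s, if_neg (fun hmem => absurd hmem.2 (not_le.mpr hs.1))])]
    simp only [setIntegral_const, measureReal_def, Real.volume_Ioc, smul_eq_mul,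
      ENNReal.toReal_ofReal (le_of_lt (sub_pos.mpr ht))]
    ring
  rw [e1, e2, ha_def]
  field_simp
  ring

lemma integral_val (ε : ℝ) (hε0 : 0 ≤ ε) (hε1 : ε ≤ 1) (k : ℕ) (hk : 1 ≤ k) :
    ∫ t in (0:ℝ)..1, (t + yEps ε k t) * uEps ε k t
      = (1 + ((k:ℝ)*(1-ε)+ε)) * Real.sqrt (((k:ℝ)*(1-ε)+ε)^2 - ε^2) * ((1/(k:ℝ))^2/2) := by
  have hk0 : (0:ℝ) < (k:ℝ) := by exact_mod_cast hk
  have hk1 : (1:ℝ) ≤ (k:ℝ) := by exact_mod_cast hk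
  have hik : (0:ℝ) < 1/(k:ℝ) := by positivity
  have hik1 : 1/(k:ℝ) ≤ 1 := by rw [div_le_one hk0]; exact hk1
  set a : ℝ := (k:ℝ)*(1-ε)+ε with ha_def
  set b : ℝ := Real.sqrt (a^2 - ε^2) with hb_def
  have hu : ∀ t, uEps ε k t = if t ∈ Set.Icc (0:ℝ) (1/k) then b else 0 := fun t => rfl
  rw [intervalIntegral.integral_of_le zero_le_one]
  have hsplit : Set.Ioc (0:ℝ) 1 = Set.Ioc (0:ℝ) (1/k) ∪ Set.Ioc (1/(k:ℝ)) 1 :=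
    (Set.Ioc_union_Ioc_eq_Ioc (le_of_lt hik) hik1).symm
  set F : ℝ → ℝ := fun t => (t + yEps ε k t) * uEps ε k t with hF_def
  have hEq1 : Set.EqOn F (fun t => (1+a)*b*t) (Set.Ioc (0:ℝ) (1/k)) := by
    intro t ht
    have hmem : t ∈ Set.Icc (0:ℝ) (1/k) := ⟨le_of_lt ht.1, ht.2⟩
    have hy : yEps ε k t = a * t := yEps_low ε hε0 hε1 k hmem
    simp only [hF_def, hu t, if_pos hmem, hy]
    ring
  have hEq2 : Set.EqOn F (fun _ => (0:ℝ)) (Set.Ioc (1/(k:ℝ)) 1) := by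
    intro t ht
    have hnot : t ∉ Set.Icc (0:ℝ) (1/k) := fun hmem => absurd hmem.2 (not_le.mpr ht.1)
    simp only [hF_def, hu t, if_neg hnot, mul_zero]
  have hI1 : IntegrableOn F (Set.Ioc (0:ℝ) (1/k)) := by
    have hc : Continuous (fun t : ℝ => (1+a)*b*t) := by continuity
    exact hc.integrableOn_Ioc.congr_fun (fun t ht => (hEq1 ht).symm) measurableSet_Ioc
  have hI2 : IntegrableOn F (Set.Ioc (1/(k:ℝ)) 1) := by
    refine (integrableOn_const (C := (0:ℝ)) measure_Ioc_lt_top.ne).congr_fun ?_ measurableSet_Ioc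
    exact fun t ht => (hEq2 ht).symm
  rw [hsplit, setIntegral_union (Set.Ioc_disjoint_Ioc_of_le le_rfl) measurableSet_Ioc hI1 hI2]
  rw [setIntegral_congr_fun measurableSet_Ioc hEq2, setIntegral_congr_fun measurableSet_Ioc hEq1]
  rw [← intervalIntegral.integral_of_le (le_of_lt hik)]
  rw [intervalIntegral.integral_const_mul, integral_id]
  simp only [integral_zero, add_zero, zero_add]
  ring

theorem intro_problem_minimizing_sequence
    (ε : ℝ) (hε : ε ∈ Set.Ioo (0:ℝ) 1) :
    (∀ k : ℕ, 1 ≤ k →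
      (∀ t ∈ Set.Icc (0:ℝ) (1 / k), yEps ε k t = ((k : ℝ) * (1 - ε) + ε) * t) ∧
      (∀ t ∈ Set.Ioc (1 / (k:ℝ)) 1, yEps ε k t = ε * t + 1 - ε) ∧
      yEps ε k 1 = 1 ∧
      (∀ t ∈ Set.Icc (0:ℝ) 1, 0 ≤ yEps ε k t ∧ yEps ε k t ≤ 1)) ∧
    Tendsto (fun k : ℕ => ∫ t in (0:ℝ)..1, (t + yEps ε k t) * uEps ε k t)
      atTop (nhds ((1 - ε) ^ 2 / 2)) := by
  obtain ⟨hε0, hε1⟩ := hε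
  constructor
  · intro k hk
    have hk0 : (0:ℝ) < (k:ℝ) := by exact_mod_cast hk
    have hk1 : (1:ℝ) ≤ (k:ℝ) := by exact_mod_cast hk
    have hik : (0:ℝ) < 1/(k:ℝ) := by positivity
    have hik1 : 1/(k:ℝ) ≤ 1 := by rw [div_le_one hk0]; exact hk1
    refine ⟨fun t ht => yEps_low ε hε0.le hε1.le k ht,
      fun t ht => yEps_high ε hε0.le hε1.le k hk ht.1, ?_, ?_⟩
    · rcases lt_or_eq_of_le hik1 with h | h
      · rw [yEps_high ε hε0.le hε1.le k hk h]; ring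
      · have hkval : (k:ℝ) = 1 := by
          field_simp at h; linarith
        rw [yEps_low ε hε0.le hε1.le k ⟨zero_le_one, h.ge⟩, hkval]; ring
    · intro t ht
      obtain ⟨ht0, ht1⟩ := ht
      by_cases h : t ≤ 1/(k:ℝ)
      · rw [yEps_low ε hε0.le hε1.le k ⟨ht0, h⟩]
        have htk : t * (k:ℝ) ≤ 1 := by
          rw [← le_div_iff₀ hk0] at *; exact h
        constructor
        · have ha0 : (0:ℝ) ≤ (k:ℝ)*(1-ε)+ε := by nlinarith
          exact mul_nonneg ha0 ht0
        · nlinarith [mul_nonneg (sub_nonneg.mpr htk) (sub_nonneg.mpr hε1.le),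
            mul_nonneg hε0.le (sub_nonneg.mpr ht1)]
      · rw [yEps_high ε hε0.le hε1.le k hk (not_le.mp h)]
        constructor
        · nlinarith [mul_nonneg hε0.le ht0]
        · nlinarith [mul_nonneg hε0.le (sub_nonneg.mpr ht1)]
  · set h : ℝ → ℝ := fun x =>
      ((1-ε) + ε*x + x) * Real.sqrt (((1-ε)+ε*x)^2 - (ε*x)^2) / 2 with hh_def
    have hc : Continuous h := by
      apply Continuous.div_const
      exact (by continuity : Continuous fun x : ℝ => (1-ε) + ε*x + x).mul
        (Real.continuous_sqrt.comp (by continuity))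
    have h0 : h 0 = (1-ε)^2/2 := by
      have e : ((1-ε)+ε*0)^2 - (ε*0)^2 = (1-ε)^2 := by ring
      simp only [hh_def, e, Real.sqrt_sq (by linarith : (0:ℝ) ≤ 1-ε)]
      ring
    have htend : Tendsto (fun k : ℕ => h (1/(k:ℝ))) atTop (nhds ((1-ε)^2/2)) := by
      rw [← h0]
      exact (hc.tendsto 0).comp tendsto_one_div_atTop_nhds_zero_nat
    refine Tendsto.congr' ?_ htend
    filter_upwards [eventually_ge_atTop 1] with k hk
    have hk0 : (0:ℝ) < (k:ℝ) := by exact_mod_cast hk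
    set x : ℝ := 1/(k:ℝ) with hx_def
    have hx0 : 0 ≤ x := by positivity
    have hxk : (k:ℝ) * x = 1 := by
      rw [hx_def]; field_simp
    set a : ℝ := (k:ℝ)*(1-ε)+ε with ha_def
    have hax : a * x = (1-ε) + ε*x := by
      rw [ha_def]; linear_combination (1-ε) * hxk
    have haε : ε ≤ a := by nlinarith
    have hsq : ((1-ε)+ε*x)^2 - (ε*x)^2 = (a^2-ε^2)*x^2 := by
      rw [← hax]; ring
    rw [integral_val ε hε0.le hε1.le k hk]
    show ((1-ε) + ε*x + x) * Real.sqrt (((1-ε)+ε*x)^2 - (ε*x)^2) / 2 = _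
    rw [hsq]
    rw [Real.sqrt_mul (by nlinarith) (x^2), Real.sqrt_sq hx0, ← hax]
    ring
end

section
/- Fix ε∈(0,1). The infimum of ∫_0^1 (t+y(t))u(t)dt over nonnegative u∈L^1([0,1]) and y solving ẏ=√(ε²+u²), y(0)=0, y(1)=1, 0≤y≤1, is equal to (1−ε)²/2. -/
open intervalIntegral in
lemma int_id01 : ∫ x in (0:ℝ)..1, x = 1/2 := by
  rw [integral_id]; norm_num


open intervalIntegral in
lemma int_id' (a b : ℝ) : ∫ x in a..b, x = (b ^ 2 - a ^ 2) / 2 := integral_id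

open MeasureTheory Set

/-- Achievable costs for the introductory problem with parameter `ε`:
nonnegative integrable controls `u`, trajectory `y(t) = ∫_0^t √(ε² + u(s)²)`
with `y(1) = 1` and `0 ≤ y(t) ≤ 1` on `[0,1]`. -/
def epsCosts (ε : ℝ) : Set ℝ :=
  {c : ℝ | ∃ u : ℝ → ℝ, (∀ t, 0 ≤ u t) ∧ IntervalIntegrable u volume 0 1 ∧
    (∫ s in (0:ℝ)..1, Real.sqrt (ε ^ 2 + (u s) ^ 2)) = 1 ∧
    (∀ t ∈ Set.Icc (0:ℝ) 1,
      (0:ℝ) ≤ (∫ s in (0:ℝ)..t, Real.sqrt (ε ^ 2 + (u s) ^ 2)) ∧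
      (∫ s in (0:ℝ)..t, Real.sqrt (ε ^ 2 + (u s) ^ 2)) ≤ 1) ∧
    c = ∫ t in (0:ℝ)..1, (t + ∫ s in (0:ℝ)..t, Real.sqrt (ε ^ 2 + (u s) ^ 2)) * u t}

lemma fubini_swap (f g : ℝ → ℝ)
    (hfi : IntegrableOn f (Set.Ioc 0 1)) (hgi : IntegrableOn g (Set.Ioc 0 1)) :
    ∫ t in Set.Ioc (0:ℝ) 1, g t * ∫ s in Set.Ioc 0 t, f s
      = ∫ s in Set.Ioc (0:ℝ) 1, f s * ∫ t in Set.Ioc s 1, g t := by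
  set μ := volume.restrict (Set.Ioc (0:ℝ) 1) with hμ
  have hFint : Integrable (fun p : ℝ × ℝ => {p : ℝ × ℝ | p.2 ≤ p.1}.indicator
      (fun p : ℝ × ℝ => g p.1 * f p.2) p) (μ.prod μ) := by
    refine (Integrable.mul_prod hgi hfi).indicator ?_
    exact measurableSet_le measurable_snd measurable_fst
  have hswap := integral_integral_swap (f := fun t s : ℝ =>
      {p : ℝ × ℝ | p.2 ≤ p.1}.indicator (fun p : ℝ × ℝ => g p.1 * f p.2) (t, s))
      (μ := μ) (ν := μ) hFint
  have hL : (∫ t, ∫ s, {p : ℝ × ℝ | p.2 ≤ p.1}.indicator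
      (fun p : ℝ × ℝ => g p.1 * f p.2) (t, s) ∂μ ∂μ)
      = ∫ t in Set.Ioc (0:ℝ) 1, g t * ∫ s in Set.Ioc 0 t, f s := by
    rw [hμ]
    refine setIntegral_congr_fun measurableSet_Ioc (fun t ht => ?_)
    have : (fun s => {p : ℝ × ℝ | p.2 ≤ p.1}.indicator
        (fun p : ℝ × ℝ => g p.1 * f p.2) (t, s))
        = (Set.Iic t).indicator (fun s => g t * f s) := by
      ext s
      by_cases h : s ≤ t <;> simp [Set.indicator_apply, h]
    rw [this, setIntegral_indicator measurableSet_Iic]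
    have hset : Set.Ioc (0:ℝ) 1 ∩ Set.Iic t = Set.Ioc 0 t := by
      rw [Set.Ioc_inter_Iic, min_eq_right ht.2]
    rw [hset, integral_const_mul]
  have hR : (∫ s, ∫ t, {p : ℝ × ℝ | p.2 ≤ p.1}.indicator
      (fun p : ℝ × ℝ => g p.1 * f p.2) (t, s) ∂μ ∂μ)
      = ∫ s in Set.Ioc (0:ℝ) 1, f s * ∫ t in Set.Ioc s 1, g t := by
    rw [hμ]
    refine setIntegral_congr_fun measurableSet_Ioc (fun s hs => ?_)
    have : (fun t => {p : ℝ × ℝ | p.2 ≤ p.1}.indicator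
        (fun p : ℝ × ℝ => g p.1 * f p.2) (t, s))
        = (Set.Ici s).indicator (fun t => f s * g t) := by
      ext t
      by_cases h : s ≤ t <;> simp [Set.indicator_apply, h, mul_comm]
    rw [this, setIntegral_indicator measurableSet_Ici]
    have hset : Set.Ioc (0:ℝ) 1 ∩ Set.Ici s = Set.Icc s 1 := by
      ext x; simp only [Set.mem_inter_iff, Set.mem_Ioc, Set.mem_Ici, Set.mem_Icc]
      constructor
      · rintro ⟨⟨_, h1⟩, h2⟩; exact ⟨h2, h1⟩
      · rintro ⟨h1, h2⟩; exact ⟨⟨lt_of_lt_of_le hs.1 h1, h2⟩, h1⟩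
    rw [hset, integral_const_mul, integral_Icc_eq_integral_Ioc]
  rw [hL, hR] at hswap
  exact hswap

lemma lower_bound (ε : ℝ) (hε : ε ∈ Set.Ioo (0:ℝ) 1) (c : ℝ) (hc : c ∈ epsCosts ε) :
    (1 - ε) ^ 2 / 2 ≤ c := by
  obtain ⟨u, hu0, huI, htot, hbd, hcost⟩ := hc
  have hε0 : (0:ℝ) < ε := hε.1
  have hε1 : ε < 1 := hε.2
  set f : ℝ → ℝ := fun s => Real.sqrt (ε ^ 2 + u s ^ 2) with hfdef
  have hf0 : ∀ s, 0 ≤ f s := fun s => Real.sqrt_nonneg _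
  have hfε : ∀ s, ε ≤ f s := by
    intro s
    have : Real.sqrt (ε ^ 2) ≤ f s := Real.sqrt_le_sqrt (by nlinarith [sq_nonneg (u s)])
    rwa [Real.sqrt_sq hε0.le] at this
  have hfle : ∀ s, f s ≤ ε + u s := by
    intro s
    have h1 : Real.sqrt (ε ^ 2 + u s ^ 2) ≤ Real.sqrt ((ε + u s) ^ 2) :=
      Real.sqrt_le_sqrt (by nlinarith [hu0 s])
    rwa [Real.sqrt_sq (add_nonneg hε0.le (hu0 s))] at h1
  have huI' : IntegrableOn u (Set.Ioc 0 1) volume := by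
    have := intervalIntegrable_iff.mp huI
    rwa [uIoc_of_le (by norm_num : (0:ℝ) ≤ 1)] at this
  have hfmeas : AEStronglyMeasurable f (volume.restrict (Set.Ioc (0:ℝ) 1)) := by
    exact (Real.continuous_sqrt.comp
      (continuous_const.add (continuous_pow 2))).comp_aestronglyMeasurable
      huI'.aestronglyMeasurable
  have hfI : IntegrableOn f (Set.Ioc 0 1) volume := by
    have hconst : IntegrableOn (fun _ : ℝ => ε) (Set.Ioc 0 1) volume :=
      (integrableOn_const_iff (by finiteness)).mpr (Or.inr measure_Ioc_lt_top)
    have hsum : IntegrableOn (fun s : ℝ => ε + u s) (Set.Ioc 0 1) volume := hconst.add huI'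
    refine Integrable.mono' hsum hfmeas ?_
    filter_upwards with s
    rw [Real.norm_of_nonneg (hf0 s)]
    exact hfle s
  have hfII : IntervalIntegrable f volume 0 1 := by
    rw [intervalIntegrable_iff, uIoc_of_le (by norm_num : (0:ℝ) ≤ 1)]; exact hfI
  set Y : ℝ → ℝ := fun t => ∫ s in Set.Ioc 0 t, f s with hYdef
  have hyY : ∀ t ∈ Set.Icc (0:ℝ) 1, (∫ s in (0:ℝ)..t, Real.sqrt (ε ^ 2 + u s ^ 2)) = Y t := by
    intro t ht
    rw [intervalIntegral.integral_of_le ht.1]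
  have htot' : Y 1 = 1 := by
    rw [← hyY 1 (by norm_num)]; exact htot
  have hYcont : ContinuousOn Y (Set.Icc (0:ℝ) 1) :=
    intervalIntegral.continuousOn_primitive ((integrableOn_Icc_iff_integrableOn_Ioc (by finiteness)).mpr hfI)
  -- additivity and upper bound for Y
  have hYadd : ∀ t ∈ Set.Icc (0:ℝ) 1, Y t + ∫ s in Set.Ioc t 1, f s = 1 := by
    intro t ht
    have h := setIntegral_union (Set.Ioc_disjoint_Ioc_of_le (a := (0:ℝ)) (b := t) (c := t) (d := 1) le_rfl)
      measurableSet_Ioc (hfI.mono_set (Set.Ioc_subset_Ioc_right ht.2))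
      (hfI.mono_set (Set.Ioc_subset_Ioc_left ht.1))
    rw [Set.Ioc_union_Ioc_eq_Ioc ht.1 ht.2] at h
    have h1 : Y 1 = ∫ s in Set.Ioc (0:ℝ) 1, f s := rfl
    have h2 : Y t = ∫ s in Set.Ioc (0:ℝ) t, f s := rfl
    linarith [h, htot', h1, h2]
  have hYub : ∀ t ∈ Set.Icc (0:ℝ) 1, Y t ≤ 1 - ε * (1 - t) := by
    intro t ht
    have hεint : ∫ s in Set.Ioc t 1, ε ≤ ∫ s in Set.Ioc t 1, f s := by
      refine setIntegral_mono_on ((integrableOn_const_iff (by finiteness)).mpr ?_)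
        (hfI.mono_set (Set.Ioc_subset_Ioc_left ht.1)) measurableSet_Ioc (fun s _ => hfε s)
      right; exact measure_Ioc_lt_top
    have hεval : ∫ s in Set.Ioc t 1, (ε:ℝ) = ε * (1 - t) := by
      rw [setIntegral_const, Real.volume_real_Ioc, smul_eq_mul,
        max_eq_left (by linarith [ht.2] : (0:ℝ) ≤ 1 - t)]
      ring
    have := hYadd t ht
    nlinarith [hεint, hεval]
  have hY0 : ∀ t, 0 ≤ Y t := fun t => setIntegral_nonneg measurableSet_Ioc (fun s _ => hf0 s)
  -- products with continuous functions are integrable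
  have hmul : ∀ g : ℝ → ℝ, ContinuousOn g (Set.Icc (0:ℝ) 1) →
      IntegrableOn (fun s => f s * g s) (Set.Ioc 0 1) volume := by
    intro g hg
    have := hfII.mul_continuousOn (by rwa [uIcc_of_le (by norm_num : (0:ℝ) ≤ 1)])
    rw [intervalIntegrable_iff, uIoc_of_le (by norm_num : (0:ℝ) ≤ 1)] at this
    exact this
  have hfI1 : ∫ s in Set.Ioc (0:ℝ) 1, f s = 1 := htot'
  set A : ℝ := ∫ t in Set.Ioc (0:ℝ) 1, Y t with hAdef
  have hYint : IntegrableOn Y (Set.Ioc 0 1) volume :=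
    (hYcont.integrableOn_Icc).mono_set Set.Ioc_subset_Icc_self
  -- Fubini with g = 1 : ∫ Y = ∫ f s * (1 - s)
  have hswap1 : A = ∫ s in Set.Ioc (0:ℝ) 1, f s * (1 - s) := by
    have h := fubini_swap f (fun _ => 1) hfI ((integrableOn_const_iff (by finiteness)).mpr (by
      right; exact measure_Ioc_lt_top))
    simp only [one_mul] at h
    rw [hAdef, h]
    refine setIntegral_congr_fun measurableSet_Ioc (fun s hs => ?_)
    congr 1
    rw [setIntegral_const, Real.volume_real_Ioc, smul_eq_mul,
      max_eq_left (by linarith [hs.2] : (0:ℝ) ≤ 1 - s), mul_one]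
  have hsf : ∫ s in Set.Ioc (0:ℝ) 1, f s * s = 1 - A := by
    have hint1 : IntegrableOn (fun s => f s * s) (Set.Ioc 0 1) volume :=
      hmul _ continuousOn_id
    have : ∫ s in Set.Ioc (0:ℝ) 1, f s * (1 - s)
        = (∫ s in Set.Ioc (0:ℝ) 1, f s) - ∫ s in Set.Ioc (0:ℝ) 1, f s * s := by
      rw [← integral_sub hfI hint1]
      refine setIntegral_congr_fun measurableSet_Ioc (fun s _ => ?_)
      ring
    rw [this, hfI1] at hswap1
    linarith
  -- Fubini with g = f : ∫ f Y = 1/2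
  have hfY : ∫ s in Set.Ioc (0:ℝ) 1, f s * Y s = 1 / 2 := by
    have h := fubini_swap f f hfI hfI
    have hR : ∫ s in Set.Ioc (0:ℝ) 1, f s * ∫ t in Set.Ioc s 1, f t
        = ∫ s in Set.Ioc (0:ℝ) 1, f s * (1 - Y s) := by
      refine setIntegral_congr_fun measurableSet_Ioc (fun s hs => ?_)
      congr 1
      have := hYadd s ⟨hs.1.le, hs.2⟩
      linarith
    have hfYint : IntegrableOn (fun s => f s * Y s) (Set.Ioc 0 1) volume := hmul Y hYcont
    have hsplit : ∫ s in Set.Ioc (0:ℝ) 1, f s * (1 - Y s)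
        = (∫ s in Set.Ioc (0:ℝ) 1, f s) - ∫ s in Set.Ioc (0:ℝ) 1, f s * Y s := by
      rw [← integral_sub hfI hfYint]
      refine setIntegral_congr_fun measurableSet_Ioc (fun s _ => ?_)
      ring
    rw [hR, hsplit, hfI1] at h
    linarith
  -- A ≤ 1 - ε/2
  have hAub : A ≤ 1 - ε / 2 := by
    have h1 : A ≤ ∫ t in Set.Ioc (0:ℝ) 1, (1 - ε * (1 - t)) := by
      refine setIntegral_mono_on hYint ?_ measurableSet_Ioc
        (fun t ht => hYub t ⟨ht.1.le, ht.2⟩)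
      exact (continuous_const.sub ((continuous_const.mul
        (continuous_const.sub continuous_id)))).integrableOn_Ioc
    have h2 : ∫ t in Set.Ioc (0:ℝ) 1, (1 - ε * (1 - t)) = 1 - ε / 2 := by
      rw [← intervalIntegral.integral_of_le (by norm_num : (0:ℝ) ≤ 1)]
      have he : ∫ t in (0:ℝ)..1, (1 - ε * (1 - t))
          = ∫ t in (0:ℝ)..1, ((1 - ε) + ε * t) := by
        congr 1; ext t; ring
      have hi : IntervalIntegrable (fun t : ℝ => ε * t) volume 0 1 :=
        ((by fun_prop : Continuous fun t : ℝ => ε * t)).intervalIntegrable 0 1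
      rw [he, intervalIntegral.integral_add intervalIntegrable_const hi,
        intervalIntegral.integral_const, intervalIntegral.integral_const_mul, int_id01]
      simp only [smul_eq_mul]
      ring
    linarith
  -- continuity of t + y t
  have hty : ContinuousOn (fun t => t + ∫ s in (0:ℝ)..t, Real.sqrt (ε ^ 2 + u s ^ 2))
      (Set.Icc (0:ℝ) 1) := by
    refine continuousOn_id.add (hYcont.congr ?_)
    intro t ht
    exact hyY t ht
  -- the comparison cost ≥ ∫ (t+y)(f-ε)
  have hIuy : IntervalIntegrable
      (fun t => (t + ∫ s in (0:ℝ)..t, Real.sqrt (ε ^ 2 + u s ^ 2)) * u t) volume 0 1 :=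
    huI.continuousOn_mul (by rwa [uIcc_of_le (by norm_num : (0:ℝ) ≤ 1)])
  have hIfy : IntervalIntegrable
      (fun t => (t + ∫ s in (0:ℝ)..t, Real.sqrt (ε ^ 2 + u s ^ 2)) * (f t - ε)) volume 0 1 :=
    (hfII.sub intervalIntegrable_const).continuousOn_mul
      (by rwa [uIcc_of_le (by norm_num : (0:ℝ) ≤ 1)])
  have hcmp : (∫ t in (0:ℝ)..1,
        (t + ∫ s in (0:ℝ)..t, Real.sqrt (ε ^ 2 + u s ^ 2)) * (f t - ε)) ≤ c := by
    rw [hcost]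
    refine intervalIntegral.integral_mono_on (by norm_num) hIfy hIuy (fun t ht => ?_)
    have hty0 : 0 ≤ t + ∫ s in (0:ℝ)..t, Real.sqrt (ε ^ 2 + u s ^ 2) := by
      have := (hbd t ht).1
      linarith [ht.1]
    have hfu : f t - ε ≤ u t := by linarith [hfle t]
    exact mul_le_mul_of_nonneg_left hfu hty0
  -- evaluate the lower integral
  have heval : (∫ t in (0:ℝ)..1,
        (t + ∫ s in (0:ℝ)..t, Real.sqrt (ε ^ 2 + u s ^ 2)) * (f t - ε))
      = 3 / 2 - ε / 2 - (1 + ε) * A := by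
    rw [intervalIntegral.integral_of_le (by norm_num : (0:ℝ) ≤ 1)]
    have hcongr : ∫ t in Set.Ioc (0:ℝ) 1,
        (t + ∫ s in (0:ℝ)..t, Real.sqrt (ε ^ 2 + u s ^ 2)) * (f t - ε)
        = ∫ t in Set.Ioc (0:ℝ) 1, ((f t * t + f t * Y t) - (ε * t + ε * Y t)) := by
      refine setIntegral_congr_fun measurableSet_Ioc (fun t ht => ?_)
      rw [hyY t ⟨ht.1.le, ht.2⟩]
      ring
    rw [hcongr]
    have hint1 : IntegrableOn (fun t => f t * t) (Set.Ioc 0 1) volume := hmul _ continuousOn_id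
    have hint2 : IntegrableOn (fun t => f t * Y t) (Set.Ioc 0 1) volume := hmul Y hYcont
    have hint3 : IntegrableOn (fun t : ℝ => ε * t) (Set.Ioc 0 1) volume :=
      (continuous_const.mul continuous_id).integrableOn_Ioc
    have hint4 : IntegrableOn (fun t => ε * Y t) (Set.Ioc 0 1) volume := hYint.const_mul ε
    have hint12 : IntegrableOn (fun t => f t * t + f t * Y t) (Set.Ioc 0 1) volume :=
      hint1.add hint2
    have hint34 : IntegrableOn (fun t : ℝ => ε * t + ε * Y t) (Set.Ioc 0 1) volume :=
      hint3.add hint4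
    rw [integral_sub hint12 hint34, integral_add hint1 hint2, integral_add hint3 hint4,
      hsf, hfY]
    have hid : ∫ t in Set.Ioc (0:ℝ) 1, (ε * t) = ε / 2 := by
      rw [← intervalIntegral.integral_of_le (by norm_num : (0:ℝ) ≤ 1),
        intervalIntegral.integral_const_mul, int_id01]
      ring
    rw [hid, integral_const_mul]
    rw [← hAdef]
    ring
  nlinarith [hcmp, heval, hAub]

lemma member_epsCosts (ε : ℝ) (hε : ε ∈ Set.Ioo (0:ℝ) 1) (a : ℝ) (ha : 0 < a) (ha1 : a < 1) :
    Real.sqrt ((1 - ε + a * ε) ^ 2 - (ε * a) ^ 2) * (a + (1 - ε + a * ε)) / 2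
      ∈ epsCosts ε := by
  obtain ⟨hε0, hε1⟩ := hε
  set m : ℝ := (1 - ε + a * ε) / a with hmdef
  have hma : m * a = 1 - ε + a * ε := div_mul_cancel₀ _ ha.ne'
  have hm_pos : 0 < m := by
    apply div_pos; nlinarith; exact ha
  have hmε : ε ≤ m := by
    rw [hmdef, le_div_iff₀ ha]; nlinarith
  set c : ℝ := Real.sqrt (m ^ 2 - ε ^ 2) with hcdef
  have hc0 : 0 ≤ c := Real.sqrt_nonneg _
  have hc2 : c ^ 2 = m ^ 2 - ε ^ 2 := Real.sq_sqrt (by nlinarith)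
  set u : ℝ → ℝ := fun s => if s ≤ a then c else 0 with hudef
  set h : ℝ → ℝ := fun s => if s ≤ a then m else ε with hhdef
  have hhu : ∀ s, Real.sqrt (ε ^ 2 + u s ^ 2) = h s := by
    intro s
    by_cases hs : s ≤ a
    · simp only [hudef, hhdef, if_pos hs]
      rw [show ε ^ 2 + c ^ 2 = m ^ 2 by rw [hc2]; ring, Real.sqrt_sq hm_pos.le]
    · simp only [hudef, hhdef, if_neg hs]
      rw [show ε ^ 2 + (0:ℝ) ^ 2 = ε ^ 2 by ring, Real.sqrt_sq hε0.le]
  have hufun : (fun s => Real.sqrt (ε ^ 2 + u s ^ 2)) = h := funext hhu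
  have hu0 : ∀ t, 0 ≤ u t := by
    intro t; by_cases hs : t ≤ a <;> simp [hudef, hs, hc0]
  -- integrability of u and h on any interval
  have huI : ∀ p q : ℝ, IntervalIntegrable u volume p q := by
    intro p q
    rw [intervalIntegrable_iff]
    have hfin : volume (Set.uIoc p q) ≠ ⊤ := by rw [Set.uIoc]; exact measure_Ioc_lt_top.ne
    have : u = Set.indicator (Set.Iic a) fun _ => c := by
      ext s; simp [hudef, Set.indicator_apply, Set.mem_Iic]
    rw [this]
    exact ((integrableOn_const_iff (by finiteness)).mpr (Or.inr hfin.lt_top)).indicator measurableSet_Iic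
  have hhI : ∀ p q : ℝ, IntervalIntegrable h volume p q := by
    intro p q
    rw [intervalIntegrable_iff]
    have hfin : volume (Set.uIoc p q) ≠ ⊤ := by rw [Set.uIoc]; exact measure_Ioc_lt_top.ne
    have : h = fun s => ε + Set.indicator (Set.Iic a) (fun _ => m - ε) s := by
      ext s; by_cases hs : s ≤ a <;>
        simp [hhdef, Set.indicator_apply, Set.mem_Iic, hs]
    rw [this]
    exact ((integrableOn_const_iff (by finiteness)).mpr (Or.inr hfin.lt_top)).add
      (((integrableOn_const_iff (by finiteness)).mpr (Or.inr hfin.lt_top)).indicator measurableSet_Iic)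
  -- the primitive of h
  have hY1 : ∀ t, 0 ≤ t → t ≤ a → (∫ s in (0:ℝ)..t, h s) = m * t := by
    intro t ht hta
    have : EqOn h (fun _ => m) (Set.uIcc 0 t) := by
      intro s hs
      rw [Set.uIcc_of_le ht] at hs
      have : s ≤ a := le_trans hs.2 hta
      simp [hhdef, this]
    rw [intervalIntegral.integral_congr this, intervalIntegral.integral_const, smul_eq_mul]
    ring
  have hY2 : ∀ t, a < t → (∫ s in (0:ℝ)..t, h s) = m * a + ε * (t - a) := by
    intro t hat
    rw [← intervalIntegral.integral_add_adjacent_intervals (hhI 0 a) (hhI a t),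
      hY1 a ha.le le_rfl]
    have : (∫ s in a..t, h s) = ε * (t - a) := by
      rw [intervalIntegral.integral_of_le hat.le]
      have : ∀ s ∈ Set.Ioc a t, h s = ε := by
        intro s hs; simp [hhdef, not_le.mpr hs.1]
      rw [setIntegral_congr_fun measurableSet_Ioc this, setIntegral_const, Real.volume_real_Ioc,
        smul_eq_mul, max_eq_left (by linarith : (0:ℝ) ≤ t - a)]
      ring
    rw [this]
  refine ⟨u, hu0, huI 0 1, ?_, ?_, ?_⟩
  · rw [hufun, hY2 1 ha1, hma]; ring
  · intro t ht
    rw [hufun]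
    by_cases hta : t ≤ a
    · rw [hY1 t ht.1 hta]
      constructor
      · exact mul_nonneg hm_pos.le ht.1
      · nlinarith [ht.2]
    · push_neg at hta
      rw [hY2 t hta]
      constructor
      · nlinarith [hε0.le, ht.1]
      · nlinarith [ht.2, hma]
  · rw [hufun]
    -- continuity of the primitive
    have hYcont : ContinuousOn (fun t => ∫ s in (0:ℝ)..t, h s) (Set.Icc (0:ℝ) 1) := by
      have hIcc : IntegrableOn h (Set.Icc (0:ℝ) 1) volume := by
        have := intervalIntegrable_iff.mp (hhI 0 1)
        rw [uIoc_of_le (by norm_num : (0:ℝ) ≤ 1)] at this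
        exact (integrableOn_Icc_iff_integrableOn_Ioc (by finiteness)).mpr this
      refine (intervalIntegral.continuousOn_primitive hIcc).congr ?_
      exact fun t ht => intervalIntegral.integral_of_le ht.1
    have hsplit : ∫ t in (0:ℝ)..1, (t + ∫ s in (0:ℝ)..t, h s) * u t
        = (∫ t in (0:ℝ)..a, (t + ∫ s in (0:ℝ)..t, h s) * u t)
          + ∫ t in a..1, (t + ∫ s in (0:ℝ)..t, h s) * u t := by
      rw [intervalIntegral.integral_add_adjacent_intervals]
      · refine (huI 0 a).continuousOn_mul ?_
        rw [uIcc_of_le ha.le]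
        exact continuousOn_id.add
          (hYcont.mono (fun x hx => ⟨hx.1, hx.2.trans ha1.le⟩))
      · refine (huI a 1).continuousOn_mul ?_
        rw [uIcc_of_le ha1.le]
        exact continuousOn_id.add
          (hYcont.mono (fun x hx => ⟨ha.le.trans hx.1, hx.2⟩))
    have hpiece1 : (∫ t in (0:ℝ)..a, (t + ∫ s in (0:ℝ)..t, h s) * u t)
        = (1 + m) * c * (a ^ 2 / 2) := by
      have hEq : EqOn (fun t => (t + ∫ s in (0:ℝ)..t, h s) * u t)
          (fun t => ((1 + m) * c) * t) (Set.uIcc 0 a) := by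
        intro t hts
        rw [Set.uIcc_of_le ha.le] at hts
        simp only
        rw [hY1 t hts.1 hts.2, hudef]
        simp only [if_pos hts.2]
        ring
      rw [intervalIntegral.integral_congr hEq, intervalIntegral.integral_const_mul, int_id']
      ring
    have hpiece2 : (∫ t in a..1, (t + ∫ s in (0:ℝ)..t, h s) * u t) = 0 := by
      rw [intervalIntegral.integral_of_le ha1.le]
      have : ∀ t ∈ Set.Ioc a 1, (t + ∫ s in (0:ℝ)..t, h s) * u t = 0 := by
        intro t hts
        have : u t = 0 := by simp [hudef, not_le.mpr hts.1]
        rw [this, mul_zero]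
      rw [setIntegral_congr_fun measurableSet_Ioc this]
      simp
    rw [hsplit, hpiece1, hpiece2]
    -- algebra: (1+m) c a²/2 = √((1-ε+aε)² - (εa)²) (a + (1-ε+aε))/2
    have hca : c * a = Real.sqrt ((1 - ε + a * ε) ^ 2 - (ε * a) ^ 2) := by
      have h1 : c * a = Real.sqrt ((m ^ 2 - ε ^ 2) * a ^ 2) := by
        rw [hcdef, Real.sqrt_mul (by nlinarith) (a ^ 2), Real.sqrt_sq ha.le]
      rw [h1]
      congr 1
      have h2 : (m ^ 2 - ε ^ 2) * a ^ 2 = (m * a) ^ 2 - (ε * a) ^ 2 := by ring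
      rw [h2, hma]
    have : (1 + m) * c * (a ^ 2 / 2) = (c * a) * ((a + m * a)) / 2 := by ring
    rw [this, hca, hma]
    ring

theorem intro_problem_value (ε : ℝ) (hε : ε ∈ Set.Ioo (0:ℝ) 1) :
    sInf (epsCosts ε) = (1 - ε) ^ 2 / 2 := by
  have hbdd : BddBelow (epsCosts ε) :=
    ⟨(1 - ε) ^ 2 / 2, fun c hc => lower_bound ε hε c hc⟩
  have hne : (epsCosts ε).Nonempty :=
    ⟨_, member_epsCosts ε hε (1/2) (by norm_num) (by norm_num)⟩
  refine le_antisymm ?_ (le_csInf hne (fun c hc => lower_bound ε hε c hc))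
  set V : ℝ → ℝ := fun a =>
    Real.sqrt ((1 - ε + a * ε) ^ 2 - (ε * a) ^ 2) * (a + (1 - ε + a * ε)) / 2 with hVdef
  have hVt : Filter.Tendsto V (nhdsWithin 0 (Set.Ioi 0)) (nhds ((1 - ε) ^ 2 / 2)) := by
    have hc : Continuous V := by
      apply Continuous.div_const
      apply Continuous.mul
      · exact Real.continuous_sqrt.comp (by fun_prop)
      · fun_prop
    have h0 : V 0 = (1 - ε) ^ 2 / 2 := by
      simp only [hVdef]
      rw [show (1 - ε + 0 * ε) ^ 2 - (ε * 0) ^ 2 = (1 - ε) ^ 2 by ring,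
        Real.sqrt_sq (by linarith [hε.2])]
      ring
    rw [← h0]
    exact (hc.tendsto 0).mono_left nhdsWithin_le_nhds
  refine ge_of_tendsto hVt ?_
  filter_upwards [Ioo_mem_nhdsGT_of_mem
    (⟨le_refl (0:ℝ), by norm_num⟩ : (0:ℝ) ∈ Set.Ico (0:ℝ) 1)] with a ha
  exact csInf_le hbdd (member_epsCosts ε hε a ha.1 ha.2)
end
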